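/- Let H be a real inner product space. For all a, b ∈ H one has ⟪(1 + ‖a‖²)·a − (1 + ‖b‖²)·b, a − b⟫ ≥ ‖a − b‖². -/

import Mathlib

theorem monotonicity_property {H : Type*} [NormedAddCommGroup H] [InnerProductSpace ℝ H]
    (a b : H) :
    (inner ℝ ((1 + ‖a‖ ^ 2) • a - (1 + ‖b‖ ^ 2) • b) (a - b) : ℝ) ≥ ‖a - b‖ ^ 2 := by
  have cs := real_inner_le_norm a b
  have ha := norm_nonneg a
  have hb := norm_nonneg b
  have h1 : (inner ℝ ((1 + ‖a‖ ^ 2) • a - (1 + ‖b‖ ^ 2) • b) (a - b) : ℝ)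
      = (1 + ‖a‖ ^ 2) * ‖a‖ ^ 2 - (1 + ‖a‖ ^ 2) * inner ℝ a b
        - (1 + ‖b‖ ^ 2) * inner ℝ a b + (1 + ‖b‖ ^ 2) * ‖b‖ ^ 2 := by
    simp [inner_sub_left, inner_sub_right, inner_smul_left, real_inner_self_eq_norm_sq,
      real_inner_comm a b]
    ring
  have h2 : ‖a - b‖ ^ 2 = ‖a‖ ^ 2 - 2 * inner ℝ a b + ‖b‖ ^ 2 := by
    rw [norm_sub_sq_real]
  rw [ge_iff_le, h1, h2]
  nlinarith [sq_nonneg (‖a‖ - ‖b‖), sq_nonneg (‖a‖ + ‖b‖), mul_nonneg ha hb,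
    sq_nonneg (‖a‖ * ‖b‖ - inner ℝ a b : ℝ)]
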